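/- Let G = (V,E) be a directed graph with densest pair (S*,T*), and λ_S, λ_T defined as in the min-degree bounds for directed densest subgraphs. Let ((S_1,…,S_L),(T_1,…,T_L)) be an (α, d_S, d_T, L)-decomposition with α ≥ 1. If d_S < λ_S/α and d_T < λ_T/α, then S* ⊆ S_i and T* ⊆ T_i for all i ∈ {1,…,L}; in particular the topmost level S_L ∪ T_L is nonempty. -/

import Mathlib

open Finset
open scoped Classical

variable {V : Type*} [Fintype V] [DecidableEq V]

/-- The set of directed edges of the relation `R` going from `S` to `T`. -/
noncomputable def edgesBtw (R : V → V → Prop) (S T : Finset V) : Finset (V × V) :=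
  (S ×ˢ T).filter fun p => R p.1 p.2

/-- Out-degree of `s` into the node set `T`. -/
noncomputable def outDeg (R : V → V → Prop) (s : V) (T : Finset V) : ℕ :=
  (T.filter fun t => R s t).card

/-- In-degree of `t` from the node set `S`. -/
noncomputable def inDeg (R : V → V → Prop) (t : V) (S : Finset V) : ℕ :=
  (S.filter fun s => R s t).card

/-- Directed density `ρ(S,T) = |E(S,T)| / √(|S|·|T|)`. -/
noncomputable def rhoD (R : V → V → Prop) (S T : Finset V) : ℝ :=
  (edgesBtw R S T).card / Real.sqrt ((S.card : ℝ) * T.card)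

/-- An `(α, d_S, d_T, L)`-decomposition of a directed graph `R`. -/
def IsDirDecomp (R : V → V → Prop) (α dS dT : ℝ) (L : ℕ) (S T : ℕ → Finset V) : Prop :=
  S 1 = Finset.univ ∧ T 1 = Finset.univ ∧
  (∀ i, 1 ≤ i → i < L → S (i + 1) ⊆ S i ∧ T (i + 1) ⊆ T i) ∧
  (∀ i, 1 ≤ i → i < L → ∀ s ∈ S i, α * dS < (outDeg R s (T i) : ℝ) → s ∈ S (i + 1)) ∧
  (∀ i, 1 ≤ i → i < L → ∀ s ∈ S i, (outDeg R s (T i) : ℝ) < dS → s ∉ S (i + 1)) ∧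
  (∀ i, 1 ≤ i → i < L → ∀ t ∈ T i, α * dT < (inDeg R t (S i) : ℝ) → t ∈ T (i + 1)) ∧
  (∀ i, 1 ≤ i → i < L → ∀ t ∈ T i, (inDeg R t (S i) : ℝ) < dT → t ∉ T (i + 1))


lemma card_edges_out (R : V → V → Prop) (S T : Finset V) :
    (edgesBtw R S T).card = ∑ s ∈ S, outDeg R s T := by
  rw [edgesBtw, Finset.card_filter, Finset.sum_product]
  refine Finset.sum_congr rfl fun s _ => ?_
  rw [outDeg, Finset.card_filter]

lemma card_edges_in (R : V → V → Prop) (S T : Finset V) :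
    (edgesBtw R S T).card = ∑ t ∈ T, inDeg R t S := by
  rw [edgesBtw, Finset.card_filter, Finset.sum_product, Finset.sum_comm]
  refine Finset.sum_congr rfl fun t _ => ?_
  rw [inDeg, Finset.card_filter]

lemma key_ineq (a d kR : ℝ) (ha : 0 ≤ a) (hk : 1 ≤ kR)
    (h : (a - d) * Real.sqrt kR ≤ a * Real.sqrt (kR - 1)) :
    a * (1 - Real.sqrt (1 - 1/kR)) ≤ d := by
  have hk0 : 0 < kR := by linarith
  have hsk : 0 < Real.sqrt kR := Real.sqrt_pos.mpr hk0
  have h1 : (1 : ℝ) - 1/kR = (kR - 1)/kR := by field_simp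
  have h2 : Real.sqrt (1 - 1/kR) = Real.sqrt (kR - 1) / Real.sqrt kR := by
    rw [h1, Real.sqrt_div (by linarith)]
  have h3 : a - d ≤ a * Real.sqrt (kR - 1) / Real.sqrt kR := by
    rw [le_div_iff₀ hsk]; linarith
  rw [h2, mul_sub, mul_one, mul_div_assoc] at *
  linarith

lemma min_deg_out (R : V → V → Prop) (Sstar Tstar : Finset V) (hTne : Tstar.Nonempty)
    (hmax : ∀ A B : Finset V, A.Nonempty → B.Nonempty → rhoD R A B ≤ rhoD R Sstar Tstar)
    (s : V) (hs : s ∈ Sstar) :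
    ((edgesBtw R Sstar Tstar).card : ℝ) * (1 - Real.sqrt (1 - 1/(Sstar.card : ℝ)))
      ≤ (outDeg R s Tstar : ℝ) := by
  set k := Sstar.card with hkdef
  set E := (edgesBtw R Sstar Tstar).card with hEdef
  set d := outDeg R s Tstar with hddef
  have hk1 : 1 ≤ k := Finset.card_pos.mpr ⟨s, hs⟩
  have hdE : d ≤ E := by
    rw [hEdef, card_edges_out]
    exact hddef ▸ Finset.single_le_sum (f := fun x => outDeg R x Tstar)
      (fun _ _ => Nat.zero_le _) hs
  rcases eq_or_lt_of_le hk1 with hk | hk2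
  · have hsing : Sstar = {s} := by
      rcases Finset.card_eq_one.mp hk.symm with ⟨a, ha⟩
      rw [ha] at hs ⊢
      simp_all
    have hEd : E = d := by
      rw [hEdef, card_edges_out, hsing, Finset.sum_singleton]
    rw [← hk]
    simp [hEd]
  · have hS'ne : (Sstar.erase s).Nonempty := by
      rw [← Finset.card_pos, Finset.card_erase_of_mem hs]; omega
    have hE' : (edgesBtw R (Sstar.erase s) Tstar).card = E - d := by
      rw [card_edges_out]
      have h5 : outDeg R s Tstar + ∑ x ∈ Sstar.erase s, outDeg R x Tstar
          = ∑ x ∈ Sstar, outDeg R x Tstar := by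
        simpa using Finset.add_sum_erase Sstar (fun x => outDeg R x Tstar) hs
      rw [hEdef, card_edges_out]
      omega
    have h := hmax (Sstar.erase s) Tstar hS'ne hTne
    rw [rhoD, rhoD, hE', Finset.card_erase_of_mem hs] at h
    set m := Tstar.card with hmdef
    have hm1 : 1 ≤ m := Finset.card_pos.mpr hTne
    have hkR : ((k - 1 : ℕ) : ℝ) = (k : ℝ) - 1 := by
      push_cast [Nat.cast_sub hk1]; ring
    have hER : ((E - d : ℕ) : ℝ) = (E : ℝ) - d := by
      push_cast [Nat.cast_sub hdE]; ring
    rw [hkR, hER] at h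
    have hkR2 : (2 : ℝ) ≤ (k : ℝ) := by exact_mod_cast hk2
    have hmR : (1 : ℝ) ≤ (m : ℝ) := by exact_mod_cast hm1
    have hp1 : (0 : ℝ) < Real.sqrt (((k : ℝ) - 1) * m) :=
      Real.sqrt_pos.mpr (by nlinarith)
    have hp2 : (0 : ℝ) < Real.sqrt ((k : ℝ) * m) :=
      Real.sqrt_pos.mpr (by nlinarith)
    rw [div_le_div_iff₀ hp1 hp2] at h
    rw [Real.sqrt_mul (by linarith) (m : ℝ), Real.sqrt_mul (by linarith) (m : ℝ)] at h
    have hsm : (0 : ℝ) < Real.sqrt m := Real.sqrt_pos.mpr (by linarith)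
    have h' : ((E : ℝ) - d) * Real.sqrt k ≤ (E : ℝ) * Real.sqrt ((k : ℝ) - 1) := by
      have := (mul_le_mul_iff_of_pos_right hsm).mp (by
        calc ((E : ℝ) - d) * Real.sqrt k * Real.sqrt m
            = ((E : ℝ) - d) * (Real.sqrt k * Real.sqrt m) := by ring
          _ ≤ (E : ℝ) * (Real.sqrt ((k:ℝ)-1) * Real.sqrt m) := h
          _ = (E : ℝ) * Real.sqrt ((k:ℝ)-1) * Real.sqrt m := by ring)
      exact this
    exact key_ineq (E : ℝ) (d : ℝ) (k : ℝ) (by positivity) (by linarith) h'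

lemma edgesBtw_flip_card (R : V → V → Prop) (S T : Finset V) :
    (edgesBtw (fun a b => R b a) T S).card = (edgesBtw R S T).card := by
  rw [card_edges_out, card_edges_in]
  rfl

lemma rhoD_flip (R : V → V → Prop) (S T : Finset V) :
    rhoD (fun a b => R b a) T S = rhoD R S T := by
  rw [rhoD, rhoD, edgesBtw_flip_card, mul_comm]

lemma min_deg_in (R : V → V → Prop) (Sstar Tstar : Finset V) (hSne : Sstar.Nonempty)
    (hmax : ∀ A B : Finset V, A.Nonempty → B.Nonempty → rhoD R A B ≤ rhoD R Sstar Tstar)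
    (t : V) (ht : t ∈ Tstar) :
    ((edgesBtw R Sstar Tstar).card : ℝ) * (1 - Real.sqrt (1 - 1/(Tstar.card : ℝ)))
      ≤ (inDeg R t Sstar : ℝ) := by
  have hmax' : ∀ A B : Finset V, A.Nonempty → B.Nonempty →
      rhoD (fun a b => R b a) A B ≤ rhoD (fun a b => R b a) Tstar Sstar := by
    intro A B hA hB
    rw [rhoD_flip R B A, rhoD_flip R Sstar Tstar]
    exact hmax B A hB hA
  have := min_deg_out (fun a b => R b a) Tstar Sstar hSne hmax' t ht
  rw [edgesBtw_flip_card] at this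
  exact this

/-- If `d_S < λ_S/α` and `d_T < λ_T/α`, the densest pair survives in every level of
an `(α, d_S, d_T, L)`-decomposition; in particular the topmost level is nonempty. -/
theorem directed_decomp_top_level_nonempty (R : V → V → Prop) (α dS dT : ℝ)
    (hα : 1 ≤ α) (L : ℕ) (hL : 1 ≤ L)
    (S T : ℕ → Finset V) (hdec : IsDirDecomp R α dS dT L S T)
    (Sstar Tstar : Finset V) (hSne : Sstar.Nonempty) (hTne : Tstar.Nonempty)
    (hmax : ∀ A B : Finset V, A.Nonempty → B.Nonempty →
      rhoD R A B ≤ rhoD R Sstar Tstar)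
    (lamS lamT : ℝ)
    (hlS : lamS = ((edgesBtw R Sstar Tstar).card : ℝ) *
      (1 - Real.sqrt (1 - 1 / Sstar.card)))
    (hlT : lamT = ((edgesBtw R Sstar Tstar).card : ℝ) *
      (1 - Real.sqrt (1 - 1 / Tstar.card)))
    (hdS : dS < lamS / α) (hdT : dT < lamT / α) :
    (∀ i, 1 ≤ i → i ≤ L → Sstar ⊆ S i ∧ Tstar ⊆ T i) ∧ (S L ∪ T L).Nonempty := by
  obtain ⟨hS1, hT1, _, hSup, _, hTup, _⟩ := hdec
  have hαpos : (0 : ℝ) < α := lt_of_lt_of_le one_pos hα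
  have hαdS : α * dS < lamS := by
    rw [lt_div_iff₀ hαpos] at hdS; linarith [hdS]
  have hαdT : α * dT < lamT := by
    rw [lt_div_iff₀ hαpos] at hdT; linarith [hdT]
  have key : ∀ i, 1 ≤ i → i ≤ L → Sstar ⊆ S i ∧ Tstar ⊆ T i := by
    intro i
    induction i with
    | zero => omega
    | succ n ih =>
      intro _ hnL
      by_cases hn : n = 0
      · subst hn
        exact ⟨hS1 ▸ Finset.subset_univ _, hT1 ▸ Finset.subset_univ _⟩
      · have hn1 : 1 ≤ n := Nat.one_le_iff_ne_zero.mpr hn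
        have hnL' : n < L := by omega
        obtain ⟨hSi, hTi⟩ := ih hn1 (le_of_lt hnL')
        constructor
        · intro s hs
          apply hSup n hn1 hnL' s (hSi hs)
          have h1 : lamS ≤ (outDeg R s Tstar : ℝ) :=
            hlS ▸ min_deg_out R Sstar Tstar hTne hmax s hs
          have h2 : outDeg R s Tstar ≤ outDeg R s (T n) :=
            Finset.card_le_card (Finset.filter_subset_filter _ hTi)
          have h2' : (outDeg R s Tstar : ℝ) ≤ (outDeg R s (T n) : ℝ) := by
            exact_mod_cast h2
          linarith
        · intro t ht
          apply hTup n hn1 hnL' t (hTi ht)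
          have h1 : lamT ≤ (inDeg R t Sstar : ℝ) :=
            hlT ▸ min_deg_in R Sstar Tstar hSne hmax t ht
          have h2 : inDeg R t Sstar ≤ inDeg R t (S n) :=
            Finset.card_le_card (Finset.filter_subset_filter _ hSi)
          have h2' : (inDeg R t Sstar : ℝ) ≤ (inDeg R t (S n) : ℝ) := by
            exact_mod_cast h2
          linarith
  refine ⟨key, ?_⟩
  obtain ⟨hSL, _⟩ := key L hL le_rfl
  obtain ⟨s, hs⟩ := hSne
  exact ⟨s, Finset.mem_union_left _ (hSL hs)⟩
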